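/- Let n ≥ 2 and let S ⊆ ℤⁿ be a nonempty set that is connected in the grid graph Gₙ and satisfies the following 'local convexity' property: for every 4-cycle (w, x, y, z) in Gₙ with w, x, y ∈ S, also z ∈ S. Then S is a product I₁ × ⋯ × Iₙ of (possibly infinite) intervals in ℤ. -/
import Mathlib


/-- `d` is one of the `2n` unit directions `±eᵢ` of `ℤⁿ`. -/
def IsUnitDir (n : ℕ) (d : Fin n → ℤ) : Prop :=
  ∃ i : Fin n, d = Pi.single i 1 ∨ d = -Pi.single i 1

/-- An (order-convex, possibly infinite) interval in `ℤ`. -/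
def IsIntervalZ (I : Set ℤ) : Prop := ∀ a ∈ I, ∀ b ∈ I, Set.Icc a b ⊆ I

/-- The combinatorial box spanned by `x` and `y` (each coordinate between the two
endpoints), phrased without `min`/`max`. -/
def gridBox {n : ℕ} (x y : Fin n → ℤ) : Set (Fin n → ℤ) :=
  {z | ∀ i, (x i ≤ z i ∨ y i ≤ z i) ∧ (z i ≤ x i ∨ z i ≤ y i)}

lemma unitdir_single {n : ℕ} (j : Fin n) (δ : ℤ) (hδ : δ = 1 ∨ δ = -1) :
    IsUnitDir n (Pi.single j δ) := by
  refine ⟨j, ?_⟩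
  rcases hδ with h | h <;> subst h
  · exact Or.inl rfl
  · right
    funext k
    simp only [Pi.neg_apply, Pi.single_apply]
    split <;> simp

lemma step_decomp {n : ℕ} (u v : Fin n → ℤ) (h : (∑ i, |u i - v i|) = 1) :
    ∃ i : Fin n, ∃ ε : ℤ, (ε = 1 ∨ ε = -1) ∧ v = Function.update u i (u i + ε) := by
  by_cases hall : ∀ i ∈ Finset.univ, |u i - v i| = 0
  · rw [Finset.sum_eq_zero hall] at h; exact absurd h (by norm_num)
  · push_neg at hall
    obtain ⟨i, -, hi⟩ := hall
    have h1 : |u i - v i| + ∑ j ∈ Finset.univ.erase i, |u j - v j| = 1 := by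
      rw [Finset.add_sum_erase Finset.univ (fun j => |u j - v j|) (Finset.mem_univ i)]
      exact h
    have h2 : 0 ≤ ∑ j ∈ Finset.univ.erase i, |u j - v j| :=
      Finset.sum_nonneg (fun j _ => abs_nonneg _)
    have hnn : 0 ≤ |u i - v i| := abs_nonneg _
    have hpos : 1 ≤ |u i - v i| := lt_of_le_of_ne hnn (Ne.symm hi)
    have h3 : |u i - v i| = 1 := by omega
    have h4 : ∑ j ∈ Finset.univ.erase i, |u j - v j| = 0 := by omega
    have h5 : ∀ j ∈ Finset.univ.erase i, |u j - v j| = 0 :=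
      (Finset.sum_eq_zero_iff_of_nonneg (fun j _ => abs_nonneg _)).1 h4
    have h6 : u i - v i = 1 ∨ u i - v i = -1 := (abs_eq (by norm_num)).1 h3
    refine ⟨i, v i - u i, by omega, ?_⟩
    funext k
    by_cases hk : k = i
    · rw [hk, Function.update_self]; ring
    · rw [Function.update_of_ne hk]
      have := abs_eq_zero.1 (h5 k (Finset.mem_erase.2 ⟨hk, Finset.mem_univ k⟩))
      omega

/-- Key inner lemma: if `x ∈ S` and the box from `x + ε eᵢ` to `y` is contained in `S`,
then every point `w` of the facet `{w : w i = x i + ε}` of that box can be pushed back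
down: `w - ε eᵢ ∈ S`.  Induction on the distance from `w` to `x` in the other
coordinates, using the 4-cycle closure. -/
lemma push_down {n : ℕ} (S : Set (Fin n → ℤ))
    (hconv : ∀ (x d d' : Fin n → ℤ), IsUnitDir n d → IsUnitDir n d' →
      d ≠ d' → d ≠ -d' → x ∈ S → x + d ∈ S → x + d' ∈ S → x + d + d' ∈ S)
    (i : Fin n) (ε : ℤ) (hε : ε = 1 ∨ ε = -1) (x y : Fin n → ℤ) (hx : x ∈ S)
    (hbox : gridBox (Function.update x i (x i + ε)) y ⊆ S) :
    ∀ N : ℕ, ∀ w ∈ gridBox (Function.update x i (x i + ε)) y,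
      w i = x i + ε → (∑ j ∈ Finset.univ.erase i, (w j - x j).natAbs) = N →
      Function.update w i (x i) ∈ S := by
  intro N
  induction N using Nat.strong_induction_on with
  | _ N IH =>
    intro w hw hwi hN
    by_cases h0 : ∀ j ∈ Finset.univ.erase i, (w j - x j).natAbs = 0
    · have : Function.update w i (x i) = x := by
        funext k
        by_cases hk : k = i
        · rw [hk, Function.update_self]
        · rw [Function.update_of_ne hk]
          have := h0 k (Finset.mem_erase.2 ⟨hk, Finset.mem_univ k⟩)
          omega
      rw [this]; exact hx
    · push_neg at h0
      obtain ⟨j, hj, hj0⟩ := h0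
      have hji : j ≠ i := (Finset.mem_erase.1 hj).1
      have hwj : w j ≠ x j := by omega
      set δ : ℤ := if x j < w j then -1 else 1 with hδdef
      have hδ : δ = 1 ∨ δ = -1 := by
        rw [hδdef]; split <;> simp
      set w' := Function.update w j (w j + δ) with hw'def
      have hxj : Function.update x i (x i + ε) j = x j := Function.update_of_ne hji _ _
      have hw'box : w' ∈ gridBox (Function.update x i (x i + ε)) y := by
        intro k
        by_cases hk : k = j
        · rw [hk]
          have h1 := hw j
          rw [hxj] at h1
          rw [hxj, hw'def, Function.update_self, hδdef]
          split <;> omega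
        · rw [hw'def, Function.update_of_ne hk]; exact hw k
      have hw'S : w' ∈ S := hbox hw'box
      have hwS : w ∈ S := hbox hw
      have hw'i : w' i = x i + ε := by
        rw [hw'def, Function.update_of_ne (Ne.symm hji)]; exact hwi
      have e1 : ∀ k ∈ (Finset.univ.erase i).erase j,
          (w' k - x k).natAbs = (w k - x k).natAbs := by
        intro k hk
        rw [hw'def, Function.update_of_ne (Finset.mem_erase.1 hk).1]
      have hstepdown : (w' j - x j).natAbs + 1 = (w j - x j).natAbs := by
        rw [hw'def, Function.update_self, hδdef]
        split <;> omega
      have hNw' : (∑ k ∈ Finset.univ.erase i, (w' k - x k).natAbs) < N := by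
        rw [← Finset.add_sum_erase _ (fun k => (w' k - x k).natAbs) hj,
          Finset.sum_congr rfl e1]
        rw [← Finset.add_sum_erase _ (fun k => (w k - x k).natAbs) hj] at hN
        omega
      have hu' : Function.update w' i (x i) ∈ S :=
        IH _ hNw' w' hw'box hw'i rfl
      -- now complete the 4-cycle at w'
      have hd : IsUnitDir n (Pi.single j (-δ) : Fin n → ℤ) := unitdir_single j (-δ) (by omega)
      have hd' : IsUnitDir n (Pi.single i (-ε) : Fin n → ℤ) := unitdir_single i (-ε) (by omega)
      have hne1 : (Pi.single j (-δ) : Fin n → ℤ) ≠ Pi.single i (-ε) := by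
        intro h
        have := congrFun h j
        rw [Pi.single_eq_same, Pi.single_apply, if_neg hji] at this
        omega
      have hne2 : (Pi.single j (-δ) : Fin n → ℤ) ≠ -Pi.single i (-ε) := by
        intro h
        have := congrFun h j
        rw [Pi.single_eq_same] at this
        simp only [Pi.neg_apply, Pi.single_apply, if_neg hji, neg_zero] at this
        omega
      have heq1 : w' + Pi.single j (-δ) = w := by
        funext k
        by_cases hk : k = j
        · rw [hk]
          simp only [Pi.add_apply, Pi.single_eq_same, hw'def, Function.update_self]
          ring
        · simp only [Pi.add_apply, hw'def, Function.update_of_ne hk,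
            Pi.single_apply, if_neg hk, add_zero]
      have heq2 : w' + Pi.single i (-ε) = Function.update w' i (x i) := by
        funext k
        by_cases hk : k = i
        · rw [hk]
          simp only [Pi.add_apply, Pi.single_eq_same, Function.update_self, hw'i]
          ring
        · simp only [Pi.add_apply, Pi.single_apply, if_neg hk, add_zero,
            Function.update_of_ne hk]
      have heq3 : w' + Pi.single j (-δ) + Pi.single i (-ε) = Function.update w i (x i) := by
        rw [heq1]
        funext k
        by_cases hk : k = i
        · rw [hk]
          simp only [Pi.add_apply, Pi.single_eq_same, Function.update_self, hwi]
          ring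
        · simp only [Pi.add_apply, Pi.single_apply, if_neg hk, add_zero,
            Function.update_of_ne hk]
      have := hconv w' (Pi.single j (-δ)) (Pi.single i (-ε)) hd hd' hne1 hne2
        hw'S (heq1 ▸ hwS) (heq2 ▸ hu')
      rwa [heq3] at this

/-- If `x` and `y` are joined by a path inside `S`, then the whole box between them
is contained in `S`. -/
lemma box_subset {n : ℕ} (S : Set (Fin n → ℤ))
    (hconv : ∀ (x d d' : Fin n → ℤ), IsUnitDir n d → IsUnitDir n d' →
      d ≠ d' → d ≠ -d' → x ∈ S → x + d ∈ S → x + d' ∈ S → x + d + d' ∈ S) :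
    ∀ ℓ : ℕ, ∀ x y : Fin n → ℤ, ∀ p : ℕ → Fin n → ℤ,
      p 0 = x → p ℓ = y → (∀ j < ℓ, (∑ i, |p j i - p (j + 1) i|) = 1) →
      (∀ j ≤ ℓ, p j ∈ S) → gridBox x y ⊆ S := by
  intro ℓ
  induction ℓ with
  | zero =>
    intro x y p h0 hl _ hmem z hz
    have hxy : y = x := by rw [← h0, ← hl]
    have : z = x := by
      funext k
      have := hz k
      rw [hxy] at this
      omega
    rw [this, ← h0]
    exact hmem 0 le_rfl
  | succ ℓ IH =>
    intro x y p h0 hl hstep hmem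
    have hx : x ∈ S := h0 ▸ hmem 0 (Nat.zero_le _)
    obtain ⟨i, ε, hε, h1⟩ := step_decomp (p 0) (p 1) (hstep 0 (Nat.succ_pos _))
    rw [h0] at h1
    have hboxIH : gridBox (Function.update x i (x i + ε)) y ⊆ S := by
      refine IH (Function.update x i (x i + ε)) y (fun j => p (j + 1)) ?_ ?_ ?_ ?_
      · exact h1
      · exact hl
      · intro j hj
        exact hstep (j + 1) (by omega)
      · intro j hj
        exact hmem (j + 1) (by omega)
    intro z hz
    by_cases hz' : z ∈ gridBox (Function.update x i (x i + ε)) y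
    · exact hboxIH hz'
    · have hzi : z i = x i := by
        simp only [gridBox, Set.mem_setOf_eq, not_forall] at hz'
        obtain ⟨k, hk⟩ := hz'
        have hk' : k = i := by
          by_contra hki
          rw [Function.update_of_ne hki] at hk
          exact hk (hz k)
        rw [hk', Function.update_self] at hk
        have h2 := hz i
        omega
      set w := Function.update z i (x i + ε) with hwdef
      have hwbox : w ∈ gridBox (Function.update x i (x i + ε)) y := by
        intro k
        by_cases hk : k = i
        · rw [hk, hwdef, Function.update_self, Function.update_self]
          exact ⟨Or.inl le_rfl, Or.inl le_rfl⟩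
        · rw [hwdef, Function.update_of_ne hk, Function.update_of_ne hk]
          exact hz k
      have hwi : w i = x i + ε := by rw [hwdef, Function.update_self]
      have := push_down S hconv i ε hε x y hx hboxIH
        (∑ j ∈ Finset.univ.erase i, (w j - x j).natAbs) w hwbox hwi rfl
      have hzw : Function.update w i (x i) = z := by
        funext k
        by_cases hk : k = i
        · rw [hk, Function.update_self, hzi]
        · rw [Function.update_of_ne hk, hwdef, Function.update_of_ne hk]
      rwa [hzw] at this

/-- A nonempty subset `S ⊆ ℤⁿ` (`n ≥ 2`) that is connected in the grid
graph and closed under completing 4-cycles (if three consecutive vertices `x+d, x, x+d'`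
of a 4-cycle lie in `S`, so does the fourth `x+d+d'`) is a product of intervals. -/
theorem stmt8 (n : ℕ) (hn : 2 ≤ n) (S : Set (Fin n → ℤ)) (hne : S.Nonempty)
    (hconn : ∀ x ∈ S, ∀ y ∈ S, ∃ (ℓ : ℕ) (p : ℕ → Fin n → ℤ),
      p 0 = x ∧ p ℓ = y ∧ (∀ j < ℓ, (∑ i, |p j i - p (j + 1) i|) = 1) ∧ ∀ j ≤ ℓ, p j ∈ S)
    (hconv : ∀ (x d d' : Fin n → ℤ), IsUnitDir n d → IsUnitDir n d' →
      d ≠ d' → d ≠ -d' → x ∈ S → x + d ∈ S → x + d' ∈ S → x + d + d' ∈ S) :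
    ∃ I : Fin n → Set ℤ, (∀ i, IsIntervalZ (I i)) ∧ S = {x | ∀ i, x i ∈ I i} := by
  have hbox : ∀ x ∈ S, ∀ y ∈ S, gridBox x y ⊆ S := by
    intro x hx y hy
    obtain ⟨ℓ, p, h0, hl, hstep, hmem⟩ := hconn x hx y hy
    exact box_subset S hconv ℓ x y p h0 hl hstep hmem
  refine ⟨fun i => {t | ∃ s ∈ S, s i = t}, ?_, ?_⟩
  · intro i a ha b hb c hc
    obtain ⟨u, hu, hua⟩ := ha
    obtain ⟨v, hv, hvb⟩ := hb
    refine ⟨Function.update u i c, ?_, Function.update_self _ _ _⟩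
    apply hbox u hu v hv
    intro k
    by_cases hk : k = i
    · rw [hk, Function.update_self, hua, hvb]
      obtain ⟨hc1, hc2⟩ := hc
      constructor
      · left; exact hc1
      · right; exact hc2
    · rw [Function.update_of_ne hk]
      exact ⟨Or.inl le_rfl, Or.inl le_rfl⟩
  · ext z
    simp only [Set.mem_setOf_eq]
    constructor
    · intro hzS i
      exact ⟨z, hzS, rfl⟩
    · intro hz
      choose v hvS hvz using hz
      have key : ∀ k : ℕ, ∃ w ∈ S, ∀ j : Fin n, (j : ℕ) < k → w j = z j := by
        intro k
        induction k with
        | zero => exact ⟨hne.choose, hne.choose_spec, fun j hj => absurd hj (by omega)⟩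
        | succ k IH =>
          obtain ⟨w, hwS, hw⟩ := IH
          by_cases hkn : k < n
          · refine ⟨Function.update w ⟨k, hkn⟩ (z ⟨k, hkn⟩), ?_, ?_⟩
            · apply hbox w hwS (v ⟨k, hkn⟩) (hvS _)
              intro m
              by_cases hm : m = ⟨k, hkn⟩
              · rw [hm, Function.update_self, ← hvz ⟨k, hkn⟩]
                exact ⟨Or.inr le_rfl, Or.inr le_rfl⟩
              · rw [Function.update_of_ne hm]
                exact ⟨Or.inl le_rfl, Or.inl le_rfl⟩
            · intro j hj
              by_cases hjk : j = ⟨k, hkn⟩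
              · rw [hjk, Function.update_self]
              · have hlt : (j : ℕ) < k := by
                  have : (j : ℕ) ≠ k := fun h => hjk (Fin.ext h)
                  omega
                rw [Function.update_of_ne hjk]
                exact hw j hlt
          · refine ⟨w, hwS, fun j hj => hw j ?_⟩
            have := j.isLt
            omega
      obtain ⟨w, hwS, hw⟩ := key n
      have : w = z := funext fun j => hw j j.isLt
      rwa [this] at hwS
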